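/- Let H be a real Hilbert space in which the norm satisfies ‖f‖_H = sup { |T f| : T ∈ D, ‖T‖_{H*} ≤ 1 } for a dense subspace D of H*. Let s_N be the minimum-norm interpolant of f with respect to functionals A^1,...,A^N whose span exhausts D as N → ∞. Then ‖s_N‖_H → ‖f‖_H as N → ∞. -/
import Mathlib


open Filter

/-- Convergence of norms of the minimum-norm interpolants: if the norm of `H`
is recovered as the supremum of `|T g|` over functionals `T` in the dense
subspace `D = span {A k}` with `‖T‖ ≤ 1`, then `‖s N‖ → ‖f‖`. -/
theorem spline_norm_convergence
    {H : Type*} [NormedAddCommGroup H] [InnerProductSpace ℝ H] [CompleteSpace H]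
    (A : ℕ → (H →L[ℝ] ℝ))
    (hdense : Dense ((Submodule.span ℝ (Set.range A) : Submodule ℝ (H →L[ℝ] ℝ)) : Set (H →L[ℝ] ℝ)))
    (hnorm : ∀ g : H, ‖g‖ = sSup ((fun T : H →L[ℝ] ℝ => |T g|) ''
      {T | T ∈ Submodule.span ℝ (Set.range A) ∧ ‖T‖ ≤ 1}))
    (f : H) (s : ℕ → H)
    (hinterp : ∀ N, ∀ k ≤ N, A k (s N) = A k f)
    (hmin : ∀ N (h : H), (∀ k ≤ N, A k h = A k f) → ‖s N‖ ≤ ‖h‖) :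
    Tendsto (fun N => ‖s N‖) atTop (nhds ‖f‖) := by
  set S : Set (H →L[ℝ] ℝ) :=
    {T | T ∈ Submodule.span ℝ (Set.range A) ∧ ‖T‖ ≤ 1} with hS
  have hbdd : ∀ g : H, BddAbove ((fun T : H →L[ℝ] ℝ => |T g|) '' S) := by
    intro g
    refine ⟨‖g‖, ?_⟩
    rintro y ⟨T, ⟨_, hT1⟩, rfl⟩
    calc |T g| ≤ ‖T‖ * ‖g‖ := T.le_opNorm g
      _ ≤ 1 * ‖g‖ := by
          exact mul_le_mul_of_nonneg_right hT1 (norm_nonneg g)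
      _ = ‖g‖ := one_mul _
  have hle : ∀ (g : H) (T : H →L[ℝ] ℝ), T ∈ S → |T g| ≤ ‖g‖ := by
    intro g T hT
    rw [hnorm g]
    exact le_csSup (hbdd g) ⟨T, hT, rfl⟩
  have hub : ∀ N, ‖s N‖ ≤ ‖f‖ := fun N => hmin N f (fun k _ => rfl)
  rw [Metric.tendsto_atTop]
  intro ε hε
  have h0 : (0 : H →L[ℝ] ℝ) ∈ S := ⟨Submodule.zero_mem _, by simp⟩
  have hne : ((fun T : H →L[ℝ] ℝ => |T f|) '' S).Nonempty := ⟨_, ⟨_, h0, rfl⟩⟩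
  have hlt : ‖f‖ - ε < sSup ((fun T : H →L[ℝ] ℝ => |T f|) '' S) := by
    rw [← hnorm f]; linarith
  obtain ⟨x, hx, hxlt⟩ := exists_lt_of_lt_csSup hne hlt
  obtain ⟨T, hTS, rfl⟩ := hx
  obtain ⟨n, c, v, hrep⟩ := Submodule.mem_span_set'.mp hTS.1
  choose k hk using fun i => (v i).2
  refine ⟨Finset.univ.sup k, fun N hN => ?_⟩
  have hTeq : T (s N) = T f := by
    rw [← hrep]
    simp only [ContinuousLinearMap.coe_sum', Finset.sum_apply,
      ContinuousLinearMap.coe_smul', Pi.smul_apply]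
    refine Finset.sum_congr rfl fun i _ => ?_
    have hki : k i ≤ N :=
      le_trans (Finset.le_sup (Finset.mem_univ i)) hN
    have : (v i : H →L[ℝ] ℝ) (s N) = (v i : H →L[ℝ] ℝ) f := by
      rw [← hk i]; exact hinterp N (k i) hki
    rw [this]
  have hlow : ‖f‖ - ε < ‖s N‖ := by
    calc ‖f‖ - ε < |T f| := hxlt
      _ = |T (s N)| := by rw [hTeq]
      _ ≤ ‖s N‖ := hle (s N) T hTS
  have := hub N
  rw [Real.dist_eq, abs_lt]
  constructor <;> linarith
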